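/- arXiv:1605.01314 — 4 statements merged into one kernel-verified Lean document; each statement's English description precedes it below -/
import Mathlib

section
/- The bilinear form φ^{(1)} on 𝔡_t^{(n)} defined by φ^{(1)}(M1 ⊗ D^{k1}Z^{l1}, M2 ⊗ D^{k2}Z^{l2}) = l1 · t^{k1·l1} · δ_{k1,-k2} · δ_{l1,-l2} · tr(M1·M2) is a Lie algebra 2-cocycle: it is antisymmetric and satisfies φ^{(1)}([X,Y],W) + φ^{(1)}([Y,W],X) + φ^{(1)}([W,X],Y) = 0 for all X, Y, W in 𝔡_t^{(n)}. -/
/-- The matrix quantum torus `𝔡_t^{(n)} = M_n(ℂ) ⊗ 𝔡_t`, realized as finitely supported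
families of matrices indexed by `(k,l) ∈ ℤ²`, where `(k,l)` records `D^k Z^l`. -/
abbrev DT (n : ℕ) := (ℤ × ℤ) →₀ Matrix (Fin n) (Fin n) ℂ

/-- The associative product of `𝔡_t^{(n)}`: since `DZ = t·ZD`, one has
`(M1 ⊗ D^{k1}Z^{l1})(M2 ⊗ D^{k2}Z^{l2}) = t^{-l1·k2} M1M2 ⊗ D^{k1+k2}Z^{l1+l2}`. -/
noncomputable def dmul (n : ℕ) (t : ℂ) (X Y : DT n) : DT n :=
  X.sum fun p A => Y.sum fun q B =>
    Finsupp.single (p.1 + q.1, p.2 + q.2) (t ^ (-(p.2 * q.1)) • (A * B))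

/-- The commutator Lie bracket on `𝔡_t^{(n)}`. -/
noncomputable def dbr (n : ℕ) (t : ℂ) (X Y : DT n) : DT n :=
  dmul n t X Y - dmul n t Y X

/-- The bilinear form `φ^{(1)}`, given on basis elements by
`φ^{(1)}(M1 ⊗ D^{k1}Z^{l1}, M2 ⊗ D^{k2}Z^{l2}) = l1·t^{k1·l1}·δ_{k1,-k2}·δ_{l1,-l2}·tr(M1M2)`. -/
noncomputable def phi1 (n : ℕ) (t : ℂ) (X Y : DT n) : ℂ :=
  X.sum fun p A => (p.2 : ℂ) * t ^ (p.1 * p.2) * (A * Y (-p.1, -p.2)).trace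

section helpers
variable (n : ℕ) (t : ℂ)

lemma phi1_zero_left (Y : DT n) : phi1 n t 0 Y = 0 := by
  simp [phi1]

lemma phi1_zero_right (X : DT n) : phi1 n t X 0 = 0 := by
  simp [phi1]

lemma phi1_add_left (X X' Y : DT n) :
    phi1 n t (X + X') Y = phi1 n t X Y + phi1 n t X' Y := by
  unfold phi1
  apply Finsupp.sum_add_index' <;> intros <;>
    simp [add_mul, Matrix.trace_add, mul_add]

lemma phi1_add_right (X Y Y' : DT n) :
    phi1 n t X (Y + Y') = phi1 n t X Y + phi1 n t X Y' := by
  unfold phi1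
  rw [← Finsupp.sum_add]
  congr 1; ext p A
  simp [mul_add, Matrix.trace_add]

lemma phi1_single_left (p : ℤ × ℤ) (A : Matrix (Fin n) (Fin n) ℂ) (Y : DT n) :
    phi1 n t (Finsupp.single p A) Y
      = (p.2 : ℂ) * t ^ (p.1 * p.2) * (A * Y (-p.1, -p.2)).trace := by
  unfold phi1
  rw [Finsupp.sum_single_index]
  simp

lemma phi1_single_single (p q : ℤ × ℤ) (A B : Matrix (Fin n) (Fin n) ℂ) :
    phi1 n t (Finsupp.single p A) (Finsupp.single q B)
      = if q = (-p.1, -p.2) then (p.2 : ℂ) * t ^ (p.1 * p.2) * (A * B).trace else 0 := by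
  rw [phi1_single_left, Finsupp.single_apply]
  split <;> simp

lemma dmul_zero_left (Y : DT n) : dmul n t 0 Y = 0 := by simp [dmul]

lemma dmul_zero_right (X : DT n) : dmul n t X 0 = 0 := by simp [dmul]

lemma dmul_add_left (X X' Y : DT n) :
    dmul n t (X + X') Y = dmul n t X Y + dmul n t X' Y := by
  unfold dmul
  apply Finsupp.sum_add_index' <;> intros <;>
    simp [add_mul, smul_add, Finsupp.single_add, Finsupp.sum_add]

lemma dmul_add_right (X Y Y' : DT n) :
    dmul n t X (Y + Y') = dmul n t X Y + dmul n t X Y' := by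
  unfold dmul
  rw [← Finsupp.sum_add]
  refine Finsupp.sum_congr fun p _ => ?_
  apply Finsupp.sum_add_index' <;> intros <;>
    simp [mul_add, smul_add, Finsupp.single_add]

lemma dbr_zero_left (Y : DT n) : dbr n t 0 Y = 0 := by
  simp [dbr, dmul_zero_left, dmul_zero_right]

lemma dbr_zero_right (X : DT n) : dbr n t X 0 = 0 := by
  simp [dbr, dmul_zero_left, dmul_zero_right]

lemma dbr_add_left (X X' Y : DT n) :
    dbr n t (X + X') Y = dbr n t X Y + dbr n t X' Y := by
  simp only [dbr, dmul_add_left, dmul_add_right]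
  abel

lemma dbr_add_right (X Y Y' : DT n) :
    dbr n t X (Y + Y') = dbr n t X Y + dbr n t X Y' := by
  simp only [dbr, dmul_add_left, dmul_add_right]
  abel

lemma dmul_single_single (p q : ℤ × ℤ) (A B : Matrix (Fin n) (Fin n) ℂ) :
    dmul n t (Finsupp.single p A) (Finsupp.single q B)
      = Finsupp.single (p.1 + q.1, p.2 + q.2) (t ^ (-(p.2 * q.1)) • (A * B)) := by
  unfold dmul
  rw [Finsupp.sum_single_index, Finsupp.sum_single_index] <;> simp

lemma dbr_single_single (p q : ℤ × ℤ) (A B : Matrix (Fin n) (Fin n) ℂ) :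
    dbr n t (Finsupp.single p A) (Finsupp.single q B)
      = Finsupp.single (p.1 + q.1, p.2 + q.2)
          (t ^ (-(p.2 * q.1)) • (A * B) - t ^ (-(q.2 * p.1)) • (B * A)) := by
  unfold dbr
  rw [dmul_single_single, dmul_single_single, add_comm q.1, add_comm q.2,
    ← Finsupp.single_sub]

end helpers

section singles
variable (n : ℕ) (t : ℂ)

lemma antisym_single (p q : ℤ × ℤ) (A B : Matrix (Fin n) (Fin n) ℂ) :
    phi1 n t (Finsupp.single p A) (Finsupp.single q B)
      = - phi1 n t (Finsupp.single q B) (Finsupp.single p A) := by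
  rw [phi1_single_single, phi1_single_single]
  by_cases h : q = (-p.1, -p.2)
  · have h' : p = (-q.1, -q.2) := by
      obtain ⟨q1, q2⟩ := q; obtain ⟨p1, p2⟩ := p
      simp only [Prod.mk.injEq] at h ⊢; omega
    rw [if_pos h, if_pos h']
    have h1 : q.1 = -p.1 := by rw [h]
    have h2 : q.2 = -p.2 := by rw [h]
    rw [h1, h2, Matrix.trace_mul_comm B A]
    push_cast
    ring_nf
  · have h' : ¬ p = (-q.1, -q.2) := by
      intro hc; apply h
      obtain ⟨q1, q2⟩ := q; obtain ⟨p1, p2⟩ := p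
      simp only [Prod.mk.injEq] at hc ⊢; omega
    rw [if_neg h, if_neg h', neg_zero]

lemma zpow_mul_sub (ht : t ≠ 0) (c : ℂ) (E e1 e2 : ℤ) (x y : ℂ) :
    c * t ^ E * (t ^ e1 * x - t ^ e2 * y)
      = c * t ^ (E + e1) * x - c * t ^ (E + e2) * y := by
  rw [zpow_add₀ ht, zpow_add₀ ht]; ring

lemma key (ht : t ≠ 0) (a b c d : ℤ) (x y : ℂ) :
    ((b + d : ℤ) : ℂ) * t ^ ((a + c) * (b + d)) * (t ^ (-(b * c)) * x - t ^ (-(d * a)) * y)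
    + ((-b : ℤ) : ℂ) * t ^ ((-a) * (-b)) * (t ^ (-(d * (-a - c))) * x - t ^ (-((-b - d) * c)) * y)
    + ((-d : ℤ) : ℂ) * t ^ ((-c) * (-d)) * (t ^ (-((-b - d) * a)) * x - t ^ (-(b * (-a - c))) * y)
      = 0 := by
  rw [zpow_mul_sub t ht, zpow_mul_sub t ht, zpow_mul_sub t ht]
  rw [show (a + c) * (b + d) + -(b * c) = a*b + a*d + c*d by ring,
      show (-a) * (-b) + -(d * (-a - c)) = a*b + a*d + c*d by ring,
      show (-c) * (-d) + -((-b - d) * a) = a*b + a*d + c*d by ring,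
      show (a + c) * (b + d) + -(d * a) = a*b + b*c + c*d by ring,
      show (-a) * (-b) + -((-b - d) * c) = a*b + b*c + c*d by ring,
      show (-c) * (-d) + -(b * (-a - c)) = a*b + b*c + c*d by ring]
  push_cast
  ring

lemma cocycle_single (ht : t ≠ 0) (p q r : ℤ × ℤ) (A B C : Matrix (Fin n) (Fin n) ℂ) :
    phi1 n t (dbr n t (Finsupp.single p A) (Finsupp.single q B)) (Finsupp.single r C)
    + phi1 n t (dbr n t (Finsupp.single q B) (Finsupp.single r C)) (Finsupp.single p A)
    + phi1 n t (dbr n t (Finsupp.single r C) (Finsupp.single p A)) (Finsupp.single q B)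
      = 0 := by
  rw [dbr_single_single, dbr_single_single, dbr_single_single,
      phi1_single_single, phi1_single_single, phi1_single_single]
  obtain ⟨a, b⟩ := p; obtain ⟨c, d⟩ := q; obtain ⟨r1, r2⟩ := r
  by_cases h : a + c + r1 = 0 ∧ b + d + r2 = 0
  · have h1 : (r1, r2) = (-(a + c), -(b + d)) := by
      simp only [Prod.mk.injEq]; omega
    have h2 : (a, b) = (-(c + r1), -(d + r2)) := by
      simp only [Prod.mk.injEq]; omega
    have h3 : (c, d) = (-(r1 + a), -(r2 + b)) := by
      simp only [Prod.mk.injEq]; omega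
    rw [if_pos h1, if_pos h2, if_pos h3]
    have hr1 : r1 = -a - c := by omega
    have hr2 : r2 = -b - d := by omega
    subst hr1 hr2
    simp only [Matrix.sub_mul, Matrix.smul_mul, Matrix.trace_sub, Matrix.trace_smul,
      smul_eq_mul]
    rw [Matrix.trace_mul_cycle B A C, Matrix.trace_mul_cycle C B A,
        Matrix.trace_mul_cycle C A B, Matrix.trace_mul_cycle B C A]
    rw [show (c + (-a - c)) * (d + (-b - d)) = (-a) * (-b) from by ring,
        show (-a - c + a) * (-b - d + b) = (-c) * (-d) from by ring,
        show ((d + (-b - d) : ℤ) : ℂ) = ((-b : ℤ) : ℂ) from by push_cast; ring,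
        show ((-b - d + b : ℤ) : ℂ) = ((-d : ℤ) : ℂ) from by push_cast; ring]
    have := key t ht a b c d ((A * B * C).trace) ((A * C * B).trace)
    linear_combination this
  · have n1 : ¬ ((r1, r2) = (-(a + c), -(b + d))) := by
      simp only [Prod.mk.injEq]; omega
    have n2 : ¬ ((a, b) = (-(c + r1), -(d + r2))) := by
      simp only [Prod.mk.injEq]; omega
    have n3 : ¬ ((c, d) = (-(r1 + a), -(r2 + b))) := by
      simp only [Prod.mk.injEq]; omega
    rw [if_neg n1, if_neg n2, if_neg n3]
    ring

end singles

/-- `φ^{(1)}` is a Lie algebra 2-cocycle on `𝔡_t^{(n)}`: it is antisymmetric and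
satisfies `φ([X,Y],W) + φ([Y,W],X) + φ([W,X],Y) = 0`. -/
theorem stmt2 (n : ℕ) (t : ℂ) (ht : t ≠ 0) :
    (∀ X Y : DT n, phi1 n t X Y = - phi1 n t Y X) ∧
    (∀ X Y W : DT n,
      phi1 n t (dbr n t X Y) W + phi1 n t (dbr n t Y W) X + phi1 n t (dbr n t W X) Y = 0) := by
  constructor
  · intro X
    induction X using Finsupp.induction_linear with
    | zero => intro Y; rw [phi1_zero_left, phi1_zero_right, neg_zero]
    | add f g hf hg =>
        intro Y
        rw [phi1_add_left, phi1_add_right, hf, hg]; ring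
    | single p A =>
        intro Y
        induction Y using Finsupp.induction_linear with
        | zero => rw [phi1_zero_left, phi1_zero_right, neg_zero]
        | add f g hf hg => rw [phi1_add_left, phi1_add_right, hf, hg]; ring
        | single q B => exact antisym_single n t p q A B
  · intro X
    induction X using Finsupp.induction_linear with
    | zero =>
        intro Y W
        simp [dbr_zero_left, dbr_zero_right, phi1_zero_left, phi1_zero_right]
    | add f g hf hg =>
        intro Y W
        rw [dbr_add_left, dbr_add_right, phi1_add_left, phi1_add_left, phi1_add_right]
        linear_combination hf Y W + hg Y W
    | single p A =>
        intro Y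
        induction Y using Finsupp.induction_linear with
        | zero =>
            intro W
            simp [dbr_zero_left, dbr_zero_right, phi1_zero_left, phi1_zero_right]
        | add f g hf hg =>
            intro W
            rw [dbr_add_right, dbr_add_left, phi1_add_left, phi1_add_left, phi1_add_right]
            linear_combination hf W + hg W
        | single q B =>
            intro W
            induction W using Finsupp.induction_linear with
            | zero =>
                simp [dbr_zero_left, dbr_zero_right, phi1_zero_left, phi1_zero_right]
            | add f g hf hg =>
                rw [dbr_add_right, dbr_add_left, phi1_add_left, phi1_add_left, phi1_add_right]
                linear_combination hf + hg
            | single r C => exact cocycle_single n t ht p q r A B C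
end

section
/- The bilinear form φ on 𝒟_s^{(n)} defined by φ(M1 ⊗ f1(∂)x^{l1}, M2 ⊗ f2(∂)x^{l2}) = tr(M1 M2)·Σ_{a=0}^{l1−1} f1(a·s)·f2((a−l1)·s) if l1 = −l2 > 0, = −tr(M1 M2)·Σ_{a=0}^{−l1−1} f2(a·s)·f1((a+l1)·s) if l1 = −l2 < 0, and = 0 otherwise, is a Lie algebra 2-cocycle on 𝒟_s^{(n)}: it is antisymmetric and satisfies the cocycle identity φ([X,Y],W) + φ([Y,W],X) + φ([W,X],Y) = 0. -/
open Polynomial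

/-- `𝒟_s^{(n)} = M_n(ℂ) ⊗ 𝒟_s`, realized as finitely supported families of matrices of
polynomials indexed by `l ∈ ℤ`: the component at `l` is the matrix `A(∂)` of the term `A(∂)x^l`. -/
abbrev DiffT (n : ℕ) := ℤ →₀ Matrix (Fin n) (Fin n) (Polynomial ℂ)

/-- Substitution `∂ ↦ ∂ - c` in every entry of a matrix of polynomials. -/
noncomputable def shiftP (n : ℕ) (c : ℂ) (M : Matrix (Fin n) (Fin n) (Polynomial ℂ)) :
    Matrix (Fin n) (Fin n) (Polynomial ℂ) :=
  M.map fun f => f.comp (Polynomial.X - Polynomial.C c)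

/-- The associative product of `𝒟_s^{(n)}`: since `∂x = x(∂+s)`, one has
`(A(∂)x^{l1})(B(∂)x^{l2}) = A(∂)·B(∂ - l1·s)·x^{l1+l2}`. -/
noncomputable def Dmul (n : ℕ) (s : ℂ) (F G : DiffT n) : DiffT n :=
  F.sum fun l1 A => G.sum fun l2 B =>
    Finsupp.single (l1 + l2) (A * shiftP n ((l1 : ℂ) * s) B)

/-- The commutator Lie bracket on `𝒟_s^{(n)}`. -/
noncomputable def DbrD (n : ℕ) (s : ℂ) (F G : DiffT n) : DiffT n :=
  Dmul n s F G - Dmul n s G F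

/-- The bilinear form `φ` of [BKLY, (2.3)], given on basis elements by
`φ(M1 ⊗ f1(∂)x^{l1}, M2 ⊗ f2(∂)x^{l2}) = tr(M1M2)·Σ_{a=0}^{l1−1} f1(as)f2((a−l1)s)` if
`l1 = −l2 > 0`, `= −tr(M1M2)·Σ_{a=0}^{−l1−1} f2(as)f1((a+l1)s)` if `l1 = −l2 < 0`, else `0`. -/
noncomputable def phiD (n : ℕ) (s : ℂ) (F G : DiffT n) : ℂ :=
  F.sum fun l A =>
    if 0 < l then
      ∑ a ∈ Finset.range l.toNat,
        (A.map (Polynomial.eval ((a : ℂ) * s)) *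
          (G (-l)).map (Polynomial.eval (((a : ℂ) - (l : ℂ)) * s))).trace
    else if l < 0 then
      - ∑ a ∈ Finset.range (-l).toNat,
        ((G (-l)).map (Polynomial.eval ((a : ℂ) * s)) *
          A.map (Polynomial.eval (((a : ℂ) + (l : ℂ)) * s))).trace
    else 0

/-! ### Auxiliary: indicator weights -/

noncomputable def chiZ (a : ℤ) : ℂ := if 0 ≤ a then 1 else 0

noncomputable def wgt (l a : ℤ) : ℂ := chiZ a - chiZ (a - l)

lemma wgt_support {l a : ℤ} (h : wgt l a ≠ 0) : (0 ≤ a ∧ a < l) ∨ (l ≤ a ∧ a < 0) := by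
  unfold wgt chiZ at h
  split_ifs at h <;> simp at h <;> omega

lemma wgt_eq_one {l a : ℤ} (h1 : 0 ≤ a) (h2 : a < l) : wgt l a = 1 := by
  unfold wgt chiZ
  rw [if_pos h1, if_neg (by omega)]
  ring

lemma wgt_eq_negone {l a : ℤ} (h1 : l ≤ a) (h2 : a < 0) : wgt l a = -1 := by
  unfold wgt chiZ
  rw [if_neg (by omega), if_pos (by omega)]
  ring

lemma sum_shift (f : ℤ → ℂ) (c : ℤ) (T : Finset ℤ)
    (h : ∀ a, f a ≠ 0 → a ∈ T ∧ a + c ∈ T) :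
    ∑ a ∈ T, f a = ∑ a ∈ T, f (a - c) := by
  have hinj : Function.Injective (fun x : ℤ => x - c) := fun a b hab => by
    simpa using hab
  have hmap : ∑ a ∈ T.map ⟨fun x => x - c, hinj⟩, f a = ∑ a ∈ T, f (a - c) :=
    Finset.sum_map T _ f
  rw [← hmap]
  have h1 : ∑ a ∈ T, f a = ∑ a ∈ T ∪ T.map ⟨fun x => x - c, hinj⟩, f a := by
    apply Finset.sum_subset Finset.subset_union_left
    intro x _ hx
    by_contra hfx
    exact hx ((h x hfx).1)
  have h2 : ∑ a ∈ T.map ⟨fun x => x - c, hinj⟩, f a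
      = ∑ a ∈ T ∪ T.map ⟨fun x => x - c, hinj⟩, f a := by
    apply Finset.sum_subset Finset.subset_union_right
    intro x _ hx
    by_contra hfx
    apply hx
    rw [Finset.mem_map]
    exact ⟨x + c, (h x hfx).2, by simp⟩
  rw [h1, h2]

lemma branch_eq (l : ℤ) (g : ℤ → ℂ) (T : Finset ℤ)
    (hT : Finset.Ico (min l 0) (max l 0) ⊆ T) :
    (if 0 < l then ∑ a ∈ Finset.range l.toNat, g (a : ℤ)
     else if l < 0 then - ∑ a ∈ Finset.range (-l).toNat, g ((a : ℤ) + l) else 0)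
    = ∑ a ∈ T, wgt l a * g a := by
  have hsub : ∑ a ∈ T, wgt l a * g a
      = ∑ a ∈ Finset.Ico (min l 0) (max l 0), wgt l a * g a := by
    symm
    apply Finset.sum_subset hT
    intro x _ hx
    rw [Finset.mem_Ico] at hx
    have : wgt l x = 0 := by
      by_contra hw
      rcases wgt_support hw with h | h <;> simp [min_def, max_def] at hx <;> omega
    rw [this, zero_mul]
  rw [hsub]
  rcases lt_trichotomy l 0 with hl | hl | hl
  · rw [if_neg (by omega), if_pos hl]
    have h1 : min l 0 = l := by omega
    have h2 : max l 0 = 0 := by omega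
    rw [h1, h2]
    have key : ∑ a ∈ Finset.Ico l 0, wgt l a * g a
        = ∑ a ∈ Finset.range (-l).toNat, (-(g ((a : ℤ) + l))) := by
      apply Finset.sum_nbij' (i := fun b => (b - l).toNat) (j := fun (a : ℕ) => (a : ℤ) + l)
      · intro a ha; rw [Finset.mem_Ico] at ha; rw [Finset.mem_range]; omega
      · intro a ha; rw [Finset.mem_range] at ha; rw [Finset.mem_Ico]; omega
      · intro a ha; rw [Finset.mem_Ico] at ha; omega
      · intro a ha; rw [Finset.mem_range] at ha; omega
      · intro a ha
        rw [Finset.mem_Ico] at ha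
        rw [wgt_eq_negone (by omega) (by omega)]
        have : ((a - l).toNat : ℤ) + l = a := by omega
        rw [this]
        ring
    rw [key, ← Finset.sum_neg_distrib]
  · simp [hl]
  · rw [if_pos hl]
    have h1 : min l 0 = 0 := by omega
    have h2 : max l 0 = l := by omega
    rw [h1, h2]
    symm
    apply Finset.sum_nbij' (i := fun b : ℤ => b.toNat) (j := fun (a : ℕ) => (a : ℤ))
    · intro a ha; rw [Finset.mem_Ico] at ha; rw [Finset.mem_range]; omega
    · intro a ha; rw [Finset.mem_range] at ha; rw [Finset.mem_Ico]; omega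
    · intro a ha; rw [Finset.mem_Ico] at ha; omega
    · intro a ha; simp
    · intro a ha
      rw [Finset.mem_Ico] at ha
      rw [wgt_eq_one (by omega) (by omega)]
      have : ((a.toNat : ℤ)) = a := by omega
      rw [this]
      ring

/-! ### Auxiliary: evaluation of matrices of polynomials -/

noncomputable def evM (n : ℕ) (z : ℂ) (M : Matrix (Fin n) (Fin n) (Polynomial ℂ)) :
    Matrix (Fin n) (Fin n) ℂ := M.map (Polynomial.eval z)

lemma evM_zero (n : ℕ) (z : ℂ) : evM n z 0 = 0 := by
  unfold evM; exact Matrix.map_zero _ (by simp)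

lemma evM_sub (n : ℕ) (z : ℂ) (M N : Matrix (Fin n) (Fin n) (Polynomial ℂ)) :
    evM n z (M - N) = evM n z M - evM n z N := by
  unfold evM; exact Matrix.map_sub _ (by simp) _ _

lemma evM_mul (n : ℕ) (z : ℂ) (M N : Matrix (Fin n) (Fin n) (Polynomial ℂ)) :
    evM n z (M * N) = evM n z M * evM n z N := by
  unfold evM
  have : (Polynomial.eval z : Polynomial ℂ → ℂ) = ⇑(Polynomial.evalRingHom z) := rfl
  rw [this]
  exact Matrix.map_mul

lemma evM_shiftP (n : ℕ) (z c : ℂ) (M : Matrix (Fin n) (Fin n) (Polynomial ℂ)) :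
    evM n z (shiftP n c M) = evM n (z - c) M := by
  unfold evM shiftP
  rw [Matrix.map_map]
  ext i j
  simp [Function.comp, Polynomial.eval_comp]

/-! ### phiD on singles -/

lemma phiD_single_single (n : ℕ) (s : ℂ) (l m : ℤ)
    (M C : Matrix (Fin n) (Fin n) (Polynomial ℂ)) (T : Finset ℤ)
    (hT : Finset.Ico (min l 0) (max l 0) ⊆ T) :
    phiD n s (Finsupp.single l M) (Finsupp.single m C) =
      if m = -l then
        ∑ a ∈ T, wgt l a * (evM n ((a : ℂ) * s) M * evM n (((a : ℂ) - (l : ℂ)) * s) C).trace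
      else 0 := by
  unfold phiD
  rw [Finsupp.sum_single_index (by split_ifs <;> simp [Matrix.map_zero])]
  rw [Finsupp.single_apply]
  by_cases hm : m = -l
  · rw [if_pos hm, if_pos hm]
    rw [← branch_eq l (fun a => (evM n ((a : ℂ) * s) M *
        evM n (((a : ℂ) - (l : ℂ)) * s) C).trace) T hT]
    rcases lt_trichotomy l 0 with hl | hl | hl
    · have h1 : ¬ 0 < l := by omega
      rw [if_neg h1, if_neg h1, if_pos hl, if_pos hl]
      congr 1
      apply Finset.sum_congr rfl
      intro a _
      rw [Matrix.trace_mul_comm]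
      unfold evM
      push_cast
      ring_nf
    · simp [hl]
    · rw [if_pos hl, if_pos hl]
      apply Finset.sum_congr rfl
      intro a _
      unfold evM
      push_cast
      ring_nf
  · rw [if_neg hm, if_neg hm]
    split_ifs <;> simp [Matrix.map_zero]

/-! ### Algebraic lemmas on Dmul / DbrD / phiD -/

lemma shiftP_zero (n : ℕ) (c : ℂ) : shiftP n c 0 = 0 := by
  unfold shiftP; exact Matrix.map_zero _ (by simp)

lemma shiftP_add (n : ℕ) (c : ℂ) (M N : Matrix (Fin n) (Fin n) (Polynomial ℂ)) :
    shiftP n c (M + N) = shiftP n c M + shiftP n c N := by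
  unfold shiftP; exact Matrix.map_add _ (by simp [Polynomial.add_comp]) _ _

lemma Dmul_single_single (n : ℕ) (s : ℂ) (p q : ℤ)
    (A B : Matrix (Fin n) (Fin n) (Polynomial ℂ)) :
    Dmul n s (Finsupp.single p A) (Finsupp.single q B)
      = Finsupp.single (p + q) (A * shiftP n ((p : ℂ) * s) B) := by
  unfold Dmul
  rw [Finsupp.sum_single_index (by simp [Finsupp.sum_fun_zero])]
  rw [Finsupp.sum_single_index (by rw [shiftP_zero, mul_zero, Finsupp.single_zero])]

lemma Dmul_zero_left (n : ℕ) (s : ℂ) (G : DiffT n) : Dmul n s 0 G = 0 := by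
  unfold Dmul; rw [Finsupp.sum_zero_index]

lemma Dmul_zero_right (n : ℕ) (s : ℂ) (F : DiffT n) : Dmul n s F 0 = 0 := by
  unfold Dmul
  refine Eq.trans (Finsupp.sum_congr fun x _ => ?_) (Finsupp.sum_fun_zero _)
  exact Finsupp.sum_zero_index

lemma Dmul_add_left (n : ℕ) (s : ℂ) (F F' G : DiffT n) :
    Dmul n s (F + F') G = Dmul n s F G + Dmul n s F' G := by
  unfold Dmul
  apply Finsupp.sum_add_index'
  · intro l
    refine Eq.trans (Finsupp.sum_congr fun x _ => ?_) (Finsupp.sum_fun_zero _)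
    rw [Matrix.zero_mul, Finsupp.single_zero]
  · intro l A A'
    rw [← Finsupp.sum_add]
    apply Finsupp.sum_congr
    intro l2 _
    rw [Matrix.add_mul, Finsupp.single_add]

lemma Dmul_add_right (n : ℕ) (s : ℂ) (F G G' : DiffT n) :
    Dmul n s F (G + G') = Dmul n s F G + Dmul n s F G' := by
  unfold Dmul
  rw [← Finsupp.sum_add]
  apply Finsupp.sum_congr
  intro l1 _
  apply Finsupp.sum_add_index'
  · intro l; rw [shiftP_zero, mul_zero, Finsupp.single_zero]
  · intro l B B'; rw [shiftP_add, mul_add, Finsupp.single_add]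

lemma DbrD_zero_left (n : ℕ) (s : ℂ) (G : DiffT n) : DbrD n s 0 G = 0 := by
  unfold DbrD; rw [Dmul_zero_left, Dmul_zero_right, sub_zero]

lemma DbrD_zero_right (n : ℕ) (s : ℂ) (F : DiffT n) : DbrD n s F 0 = 0 := by
  unfold DbrD; rw [Dmul_zero_left, Dmul_zero_right, sub_zero]

lemma DbrD_add_left (n : ℕ) (s : ℂ) (F F' G : DiffT n) :
    DbrD n s (F + F') G = DbrD n s F G + DbrD n s F' G := by
  unfold DbrD; rw [Dmul_add_left, Dmul_add_right]; abel

lemma DbrD_add_right (n : ℕ) (s : ℂ) (F G G' : DiffT n) :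
    DbrD n s F (G + G') = DbrD n s F G + DbrD n s F G' := by
  unfold DbrD; rw [Dmul_add_left, Dmul_add_right]; abel

lemma DbrD_single_single (n : ℕ) (s : ℂ) (p q : ℤ)
    (A B : Matrix (Fin n) (Fin n) (Polynomial ℂ)) :
    DbrD n s (Finsupp.single p A) (Finsupp.single q B)
      = Finsupp.single (p + q)
          (A * shiftP n ((p : ℂ) * s) B - B * shiftP n ((q : ℂ) * s) A) := by
  unfold DbrD
  rw [Dmul_single_single, Dmul_single_single]
  rw [show q + p = p + q by ring, ← Finsupp.single_sub]

lemma phiD_zero_left (n : ℕ) (s : ℂ) (G : DiffT n) : phiD n s 0 G = 0 := by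
  unfold phiD; rw [Finsupp.sum_zero_index]

lemma phiD_zero_right (n : ℕ) (s : ℂ) (F : DiffT n) : phiD n s F 0 = 0 := by
  unfold phiD
  refine Eq.trans (Finsupp.sum_congr fun x _ => ?_) (Finsupp.sum_fun_zero _)
  split_ifs <;> simp [Matrix.map_zero]

lemma phiD_add_left (n : ℕ) (s : ℂ) (F F' G : DiffT n) :
    phiD n s (F + F') G = phiD n s F G + phiD n s F' G := by
  unfold phiD
  apply Finsupp.sum_add_index'
  · intro l; split_ifs <;> simp [Matrix.map_zero]
  · intro l A A'
    have hmap : ∀ z : ℂ, (A + A').map (Polynomial.eval z)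
        = A.map (Polynomial.eval z) + A'.map (Polynomial.eval z) :=
      fun z => Matrix.map_add _ (by simp) _ _
    split_ifs <;>
      (try simp only [hmap, Matrix.add_mul, Matrix.mul_add, Matrix.trace_add,
        Finset.sum_add_distrib]) <;> ring

lemma phiD_add_right (n : ℕ) (s : ℂ) (F G G' : DiffT n) :
    phiD n s F (G + G') = phiD n s F G + phiD n s F G' := by
  unfold phiD
  rw [← Finsupp.sum_add]
  apply Finsupp.sum_congr
  intro l _
  have hmap : ∀ (z : ℂ) (M N : Matrix (Fin n) (Fin n) (Polynomial ℂ)),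
      (M + N).map (Polynomial.eval z) = M.map (Polynomial.eval z) + N.map (Polynomial.eval z) :=
    fun z M N => Matrix.map_add _ (by simp) _ _
  simp only [Finsupp.add_apply]
  split_ifs <;>
    (try simp only [hmap, Matrix.add_mul, Matrix.mul_add, Matrix.trace_add,
      Finset.sum_add_distrib]) <;> ring

/-! ### Antisymmetry on singles -/

lemma phiD_single_antisym (n : ℕ) (s : ℂ) (l m : ℤ)
    (M C : Matrix (Fin n) (Fin n) (Polynomial ℂ)) :
    phiD n s (Finsupp.single l M) (Finsupp.single m C)
      = - phiD n s (Finsupp.single m C) (Finsupp.single l M) := by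
  set K : ℤ := (l.natAbs : ℤ) + (m.natAbs : ℤ) + 1 with hK
  set T : Finset ℤ := Finset.Icc (-K) K with hTdef
  have hT1 : Finset.Ico (min l 0) (max l 0) ⊆ T := by
    intro x hx
    rw [Finset.mem_Ico] at hx
    rw [hTdef, Finset.mem_Icc]
    omega
  have hT2 : Finset.Ico (min m 0) (max m 0) ⊆ T := by
    intro x hx
    rw [Finset.mem_Ico] at hx
    rw [hTdef, Finset.mem_Icc]
    omega
  rw [phiD_single_single n s l m M C T hT1, phiD_single_single n s m l C M T hT2]
  by_cases hm : m = -l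
  · rw [if_pos hm, if_pos (by omega)]
    subst hm
    have hshift := sum_shift
      (fun a => wgt (-l) a * (evM n ((a : ℂ) * s) C *
        evM n (((a : ℂ) - ((-l : ℤ) : ℂ)) * s) M).trace) l T ?_
    · rw [hshift, ← Finset.sum_neg_distrib]
      apply Finset.sum_congr rfl
      intro a _
      have hw : wgt l a = -(wgt (-l) (a - l)) := by
        unfold wgt
        rw [show a - l - -l = a by ring]
        ring
      rw [hw, Matrix.trace_mul_comm]
      push_cast
      ring_nf
    · intro a hfa
      have hwa : wgt (-l) a ≠ 0 := by
        intro h0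
        apply hfa
        show wgt (-l) a * _ = 0
        rw [h0, zero_mul]
      rcases wgt_support hwa with h | h <;>
        (constructor <;> rw [hTdef, Finset.mem_Icc] <;> omega)
  · rw [if_neg hm, if_neg (by omega)]
    ring

/-! ### Coefficient identities -/

lemma coeff_t1 (p q r a : ℤ) (h : p + q + r = 0) :
    wgt (p + q) a + wgt (q + r) (a - p) + wgt (r + p) (a - (p + q)) = 0 := by
  unfold wgt chiZ
  split_ifs <;> first | (exfalso; omega) | norm_num | omega

lemma coeff_t2 (p q r a : ℤ) (h : p + q + r = 0) :
    wgt (p + q) a + wgt (q + r) (a - (p + q)) + wgt (r + p) (a - q) = 0 := by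
  unfold wgt chiZ
  split_ifs <;> first | (exfalso; omega) | norm_num | omega

/-! ### The cocycle identity on singles -/

set_option maxHeartbeats 2000000 in
lemma key_single (n : ℕ) (s : ℂ) (p q r : ℤ)
    (A B C : Matrix (Fin n) (Fin n) (Polynomial ℂ)) :
    phiD n s (DbrD n s (Finsupp.single p A) (Finsupp.single q B)) (Finsupp.single r C)
    + phiD n s (DbrD n s (Finsupp.single q B) (Finsupp.single r C)) (Finsupp.single p A)
    + phiD n s (DbrD n s (Finsupp.single r C) (Finsupp.single p A)) (Finsupp.single q B)
      = 0 := by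
  set K : ℤ := 2 * ((p.natAbs : ℤ) + (q.natAbs : ℤ) + (r.natAbs : ℤ)) + 1 with hK
  set T : Finset ℤ := Finset.Icc (-K) K with hTdef
  have hmemT : ∀ x : ℤ, -K ≤ x → x ≤ K → x ∈ T := by
    intro x h1 h2; rw [hTdef, Finset.mem_Icc]; exact ⟨h1, h2⟩
  rw [DbrD_single_single, DbrD_single_single, DbrD_single_single]
  rw [phiD_single_single n s (p + q) r _ C T
      (by intro x hx; rw [Finset.mem_Ico] at hx; apply hmemT <;> omega),
    phiD_single_single n s (q + r) p _ A T
      (by intro x hx; rw [Finset.mem_Ico] at hx; apply hmemT <;> omega),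
    phiD_single_single n s (r + p) q _ B T
      (by intro x hx; rw [Finset.mem_Ico] at hx; apply hmemT <;> omega)]
  by_cases h : p + q + r = 0
  · rw [if_pos (by omega), if_pos (by omega), if_pos (by omega)]
    obtain rfl : r = -p - q := by omega
    set t1 : ℤ → ℂ := fun a =>
      (evM n ((a : ℂ) * s) A * evM n (((a - p : ℤ) : ℂ) * s) B *
        evM n (((a - p - q : ℤ) : ℂ) * s) C).trace with ht1
    set t2 : ℤ → ℂ := fun a =>
      (evM n ((a : ℂ) * s) B * evM n (((a - q : ℤ) : ℂ) * s) A *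
        evM n (((a - q - p : ℤ) : ℂ) * s) C).trace with ht2
    have e1 : ∀ a : ℤ,
        (evM n ((a : ℂ) * s)
            (A * shiftP n ((p : ℂ) * s) B - B * shiftP n ((q : ℂ) * s) A) *
          evM n (((a : ℂ) - ((p + q : ℤ) : ℂ)) * s) C).trace
        = t1 a - t2 a := by
      intro a
      rw [evM_sub, evM_mul, evM_mul, evM_shiftP, evM_shiftP, Matrix.sub_mul,
        Matrix.trace_sub]
      simp only [ht1, ht2]
      congr 1
      · push_cast
        ring_nf
      · push_cast
        ring_nf
    have e2 : ∀ a : ℤ,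
        (evM n ((a : ℂ) * s)
            (B * shiftP n ((q : ℂ) * s) C - C * shiftP n (((-p - q : ℤ) : ℂ) * s) B) *
          evM n (((a : ℂ) - ((q + (-p - q) : ℤ) : ℂ)) * s) A).trace
        = t1 (a + p) - t2 (a + (p + q)) := by
      intro a
      rw [evM_sub, evM_mul, evM_mul, evM_shiftP, evM_shiftP, Matrix.sub_mul,
        Matrix.trace_sub]
      simp only [ht1, ht2]
      congr 1
      · rw [Matrix.trace_mul_cycle]
        push_cast
        ring_nf
      · rw [Matrix.trace_mul_cycle, Matrix.trace_mul_cycle]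
        push_cast
        ring_nf
    have e3 : ∀ a : ℤ,
        (evM n ((a : ℂ) * s)
            (C * shiftP n (((-p - q : ℤ) : ℂ) * s) A - A * shiftP n ((p : ℂ) * s) C) *
          evM n (((a : ℂ) - ((-p - q + p : ℤ) : ℂ)) * s) B).trace
        = t1 (a + (p + q)) - t2 (a + q) := by
      intro a
      rw [evM_sub, evM_mul, evM_mul, evM_shiftP, evM_shiftP, Matrix.sub_mul,
        Matrix.trace_sub]
      simp only [ht1, ht2]
      congr 1
      · rw [Matrix.trace_mul_cycle, Matrix.trace_mul_cycle]
        push_cast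
        ring_nf
      · rw [Matrix.trace_mul_cycle]
        push_cast
        ring_nf
    simp only [e1, e2, e3, mul_sub]
    rw [Finset.sum_sub_distrib, Finset.sum_sub_distrib, Finset.sum_sub_distrib]
    have s2a : ∑ a ∈ T, wgt (q + (-p - q)) a * t1 (a + p)
        = ∑ a ∈ T, wgt (q + (-p - q)) (a - p) * t1 a := by
      rw [sum_shift (fun a => wgt (q + (-p - q)) a * t1 (a + p)) p T ?_]
      · apply Finset.sum_congr rfl
        intro a _
        show wgt _ (a - p) * t1 (a - p + p) = _
        rw [show a - p + p = a by ring]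
      · intro a hfa
        have hwa : wgt (q + (-p - q)) a ≠ 0 := by
          intro h0
          apply hfa
          show wgt _ a * _ = 0
          rw [h0, zero_mul]
        rcases wgt_support hwa with hw | hw <;>
          exact ⟨hmemT a (by omega) (by omega), hmemT (a + p) (by omega) (by omega)⟩
    have s2b : ∑ a ∈ T, wgt (q + (-p - q)) a * t2 (a + (p + q))
        = ∑ a ∈ T, wgt (q + (-p - q)) (a - (p + q)) * t2 a := by
      rw [sum_shift (fun a => wgt (q + (-p - q)) a * t2 (a + (p + q))) (p + q) T ?_]
      · apply Finset.sum_congr rfl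
        intro a _
        show wgt _ (a - (p + q)) * t2 (a - (p + q) + (p + q)) = _
        rw [show a - (p + q) + (p + q) = a by ring]
      · intro a hfa
        have hwa : wgt (q + (-p - q)) a ≠ 0 := by
          intro h0
          apply hfa
          show wgt _ a * _ = 0
          rw [h0, zero_mul]
        rcases wgt_support hwa with hw | hw <;>
          exact ⟨hmemT a (by omega) (by omega), hmemT (a + (p + q)) (by omega) (by omega)⟩
    have s3a : ∑ a ∈ T, wgt (-p - q + p) a * t1 (a + (p + q))
        = ∑ a ∈ T, wgt (-p - q + p) (a - (p + q)) * t1 a := by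
      rw [sum_shift (fun a => wgt (-p - q + p) a * t1 (a + (p + q))) (p + q) T ?_]
      · apply Finset.sum_congr rfl
        intro a _
        show wgt _ (a - (p + q)) * t1 (a - (p + q) + (p + q)) = _
        rw [show a - (p + q) + (p + q) = a by ring]
      · intro a hfa
        have hwa : wgt (-p - q + p) a ≠ 0 := by
          intro h0
          apply hfa
          show wgt _ a * _ = 0
          rw [h0, zero_mul]
        rcases wgt_support hwa with hw | hw <;>
          exact ⟨hmemT a (by omega) (by omega), hmemT (a + (p + q)) (by omega) (by omega)⟩
    have s3b : ∑ a ∈ T, wgt (-p - q + p) a * t2 (a + q)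
        = ∑ a ∈ T, wgt (-p - q + p) (a - q) * t2 a := by
      rw [sum_shift (fun a => wgt (-p - q + p) a * t2 (a + q)) q T ?_]
      · apply Finset.sum_congr rfl
        intro a _
        show wgt _ (a - q) * t2 (a - q + q) = _
        rw [show a - q + q = a by ring]
      · intro a hfa
        have hwa : wgt (-p - q + p) a ≠ 0 := by
          intro h0
          apply hfa
          show wgt _ a * _ = 0
          rw [h0, zero_mul]
        rcases wgt_support hwa with hw | hw <;>
          exact ⟨hmemT a (by omega) (by omega), hmemT (a + q) (by omega) (by omega)⟩
    rw [s2a, s2b, s3a, s3b]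
    have hw1 : ∀ a : ℤ, wgt (p + q) a + wgt (q + (-p - q)) (a - p)
        + wgt (-p - q + p) (a - (p + q)) = 0 := by
      intro a
      have := coeff_t1 p q (-p - q) a (by ring)
      rw [show -p - q + p = (-p - q) + p by ring]
      convert this using 3 <;> ring
    have hw2 : ∀ a : ℤ, wgt (p + q) a + wgt (q + (-p - q)) (a - (p + q))
        + wgt (-p - q + p) (a - q) = 0 := by
      intro a
      have := coeff_t2 p q (-p - q) a (by ring)
      convert this using 3 <;> ring
    rw [← Finset.sum_sub_distrib, ← Finset.sum_sub_distrib, ← Finset.sum_sub_distrib,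
      ← Finset.sum_add_distrib, ← Finset.sum_add_distrib]
    apply Finset.sum_eq_zero
    intro a _
    linear_combination t1 a * hw1 a - t2 a * hw2 a
  · rw [if_neg (by omega), if_neg (by omega), if_neg (by omega)]
    ring

/-! ### Assembly by additivity -/

lemma phiD_single_left_antisym (n : ℕ) (s : ℂ) (l : ℤ)
    (M : Matrix (Fin n) (Fin n) (Polynomial ℂ)) (G : DiffT n) :
    phiD n s (Finsupp.single l M) G = - phiD n s G (Finsupp.single l M) := by
  induction G using Finsupp.induction with
  | zero => rw [phiD_zero_right, phiD_zero_left]; ring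
  | single_add m B G' hm hB ih =>
    rw [phiD_add_right, phiD_add_left, phiD_single_antisym, ih]; ring

lemma phiD_antisym (n : ℕ) (s : ℂ) (F G : DiffT n) :
    phiD n s F G = - phiD n s G F := by
  induction F using Finsupp.induction with
  | zero => rw [phiD_zero_left, phiD_zero_right]; ring
  | single_add l A F' hl hA ih =>
    rw [phiD_add_left, phiD_add_right, ih, phiD_single_left_antisym]; ring

lemma J_single2 (n : ℕ) (s : ℂ) (p q : ℤ)
    (A B : Matrix (Fin n) (Fin n) (Polynomial ℂ)) (H : DiffT n) :
    phiD n s (DbrD n s (Finsupp.single p A) (Finsupp.single q B)) H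
    + phiD n s (DbrD n s (Finsupp.single q B) H) (Finsupp.single p A)
    + phiD n s (DbrD n s H (Finsupp.single p A)) (Finsupp.single q B) = 0 := by
  induction H using Finsupp.induction with
  | zero =>
    rw [phiD_zero_right, DbrD_zero_right, phiD_zero_left, DbrD_zero_left, phiD_zero_left]
    ring
  | single_add r C H' hr hC ih =>
    rw [phiD_add_right, DbrD_add_right, phiD_add_left, DbrD_add_left, phiD_add_left]
    linear_combination key_single n s p q r A B C + ih

lemma J_single1 (n : ℕ) (s : ℂ) (p : ℤ)
    (A : Matrix (Fin n) (Fin n) (Polynomial ℂ)) (G : DiffT n) : ∀ H : DiffT n,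
    phiD n s (DbrD n s (Finsupp.single p A) G) H
    + phiD n s (DbrD n s G H) (Finsupp.single p A)
    + phiD n s (DbrD n s H (Finsupp.single p A)) G = 0 := by
  induction G using Finsupp.induction with
  | zero =>
    intro H
    rw [DbrD_zero_right, phiD_zero_left, DbrD_zero_left, phiD_zero_left, phiD_zero_right]
    ring
  | single_add q B G' hq hB ih =>
    intro H
    rw [DbrD_add_right, phiD_add_left, DbrD_add_left, phiD_add_left, phiD_add_right]
    linear_combination J_single2 n s p q A B H + ih H

lemma J_all (n : ℕ) (s : ℂ) (F : DiffT n) : ∀ G H : DiffT n,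
    phiD n s (DbrD n s F G) H + phiD n s (DbrD n s G H) F + phiD n s (DbrD n s H F) G = 0 := by
  induction F using Finsupp.induction with
  | zero =>
    intro G H
    rw [DbrD_zero_left, phiD_zero_left, phiD_zero_right, DbrD_zero_right, phiD_zero_left]
    ring
  | single_add p A F' hp hA ih =>
    intro G H
    rw [DbrD_add_left, phiD_add_left, phiD_add_right, DbrD_add_right, phiD_add_left]
    linear_combination J_single1 n s p A G H + ih G H


/-- `φ` is a Lie algebra 2-cocycle on `𝒟_s^{(n)}`: it is antisymmetric and satisfies
the cocycle identity `φ([X,Y],W) + φ([Y,W],X) + φ([W,X],Y) = 0`. -/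
theorem stmt5 (n : ℕ) (s : ℂ) :
    (∀ F G : DiffT n, phiD n s F G = - phiD n s G F) ∧
    (∀ F G H : DiffT n,
      phiD n s (DbrD n s F G) H + phiD n s (DbrD n s G H) F + phiD n s (DbrD n s H F) G = 0) := by
  exact ⟨phiD_antisym n s, J_all n s⟩
end

section
/- For n ≥ 3, d ∈ ℂ× not a root of unity, and k ≠ 0, the linear system Σ_{i∈ℤ/nℤ} b(i,j)·c_i = 0 for all j ∈ {1,…,n−1} together with c_0 = 1, where b(i,j) = a_{i,j}·d^{−k·m_{i,j}} with a_{i,j} = 2δ_{i,j} − δ_{i,j+1} − δ_{i,j−1} and m_{i,j} = δ_{i,j+1} − δ_{i,j−1} (indices mod n), has a unique solution (c_i), and for this solution the diagonal matrix c_0·(E_{n,n} − d^{nk}E_{1,1}) + Σ_{i=1}^{n−1} c_i·d^{(n−i)k}·(E_{i,i} − E_{i+1,i+1}) equals ((1 − d^{nk})/n)·I_n, the scalar matrix with entry (1 − d^{nk})/n. -/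
open Matrix

/-- `m_{i,j} = δ_{i,j+1} − δ_{i,j−1}` (indices mod `n`). -/
def mExp (n : ℕ) (i j : ZMod n) : ℤ :=
  (if i = j + 1 then 1 else 0) - (if i = j - 1 then 1 else 0)

/-- `a_{i,j} = 2δ_{i,j} − δ_{i,j+1} − δ_{i,j−1}` (indices mod `n`). -/
def aCartan (n : ℕ) (i j : ZMod n) : ℂ :=
  2 * (if i = j then 1 else 0) - (if i = j + 1 then 1 else 0) - (if i = j - 1 then 1 else 0)

/-- the value of the explicit solution at index `m` -/
noncomputable def cv (n : ℕ) (d : ℂ) (k : ℤ) (m : ℕ) : ℂ :=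
  (1 + (m : ℂ) * ((d ^ (-(n : ℤ) * k) - 1) / (n : ℂ))) * d ^ (k * (m : ℤ))

/-- model solutions with arbitrary parameter β -/
noncomputable def cb (d : ℂ) (k : ℤ) (β : ℂ) (m : ℕ) : ℂ :=
  (1 + (m : ℂ) * β) * d ^ (k * (m : ℤ))

lemma sum_reduce (n : ℕ) [NeZero n] (hn : 3 ≤ n) (d : ℂ) (k : ℤ) (c : ZMod n → ℂ)
    (j : ZMod n) :
    ∑ i : ZMod n, aCartan n i j * d ^ (-k * mExp n i j) * c i
      = 2 * c j - d ^ (-k) * c (j + 1) - d ^ k * c (j - 1) := by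
  have h2 : ((2 : ℕ) : ZMod n) ≠ 0 := by
    rw [Ne, ZMod.natCast_eq_zero_iff]
    intro h; have := Nat.le_of_dvd (by norm_num) h; omega
  have h1 : ((1 : ℕ) : ZMod n) ≠ 0 := by
    rw [Ne, ZMod.natCast_eq_zero_iff]
    intro h; have := Nat.le_of_dvd (by norm_num) h; omega
  push_cast at h1 h2
  have ne1 : j + 1 ≠ j := by
    intro h; exact h1 (by simpa using add_left_cancel (a := j) (b := 1) (c := 0) (by simpa using h))
  have ne2 : j - 1 ≠ j := by
    intro h; exact ne1 (sub_eq_iff_eq_add.mp h).symm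
  have ne3 : j + 1 ≠ j - 1 := by
    intro h
    have : j + 2 = j + 0 := by rw [show j + 2 = j + 1 + 1 by ring, h]; ring
    exact h2 (add_left_cancel this)
  have key : ∀ i : ZMod n, aCartan n i j * d ^ (-k * mExp n i j) * c i
      = (if i = j then 2 * c j else 0) + ((if i = j + 1 then (-(d ^ (-k))) * c (j+1) else 0)
        + (if i = j - 1 then (-(d ^ k)) * c (j-1) else 0)) := by
    intro i
    unfold aCartan mExp
    split_ifs <;> simp_all <;> ring_nf
  rw [Finset.sum_congr rfl fun i _ => key i, Finset.sum_add_distrib, Finset.sum_add_distrib,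
    Finset.sum_ite_eq' Finset.univ j, Finset.sum_ite_eq' Finset.univ (j+1),
    Finset.sum_ite_eq' Finset.univ (j-1)]
  simp; ring

lemma cv_step (n : ℕ) (d : ℂ) (hd : d ≠ 0) (k : ℤ) (m : ℕ) (hm : 1 ≤ m) :
    2 * cv n d k m - d ^ (-k) * cv n d k (m + 1) - d ^ k * cv n d k (m - 1) = 0 := by
  obtain ⟨l, rfl⟩ : ∃ l, m = l + 1 := ⟨m - 1, by omega⟩
  unfold cv
  set B := (d ^ (-(n : ℤ) * k) - 1) / (n : ℂ) with hB
  have e1 : d ^ (-k) * d ^ (k * ((l : ℤ) + 1 + 1)) = d ^ (k * ((l : ℤ) + 1)) := by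
    rw [← zpow_add₀ hd]; congr 1; ring
  have e2 : d ^ k * d ^ (k * (l : ℤ)) = d ^ (k * ((l : ℤ) + 1)) := by
    rw [← zpow_add₀ hd]; congr 1; ring
  push_cast
  linear_combination (-(1 + ((l : ℂ) + 1 + 1) * B)) * e1 + (-(1 + (l : ℂ) * B)) * e2

lemma cv_wrap (n : ℕ) (hn : 3 ≤ n) (d : ℂ) (hd : d ≠ 0) (k : ℤ) :
    2 * cv n d k (n - 1) - d ^ (-k) * cv n d k 0 - d ^ k * cv n d k (n - 2) = 0 := by
  have hn0 : (n : ℂ) ≠ 0 := Nat.cast_ne_zero.mpr (by omega)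
  unfold cv
  set B := (d ^ (-(n : ℤ) * k) - 1) / (n : ℂ) with hB
  have hBn : (n : ℂ) * B = d ^ (-(n : ℤ) * k) - 1 := by
    rw [hB]; field_simp
  have e2 : d ^ k * d ^ (k * ((n : ℤ) - 2)) = d ^ (k * ((n : ℤ) - 1)) := by
    rw [← zpow_add₀ hd]; congr 1; ring
  have e3 : d ^ (-(n : ℤ) * k) * d ^ (k * ((n : ℤ) - 1)) = d ^ (-k) := by
    rw [← zpow_add₀ hd]; congr 1; ring
  have c1 : ((n - 1 : ℕ) : ℂ) = (n : ℂ) - 1 := by push_cast [Nat.cast_sub (by omega : 1 ≤ n)]; ring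
  have c2 : ((n - 2 : ℕ) : ℂ) = (n : ℂ) - 2 := by push_cast [Nat.cast_sub (by omega : 2 ≤ n)]; ring
  have c3 : ((n - 1 : ℕ) : ℤ) = (n : ℤ) - 1 := by omega
  have c4 : ((n - 2 : ℕ) : ℤ) = (n : ℤ) - 2 := by omega
  rw [c1, c2, c3, c4]
  simp only [Nat.cast_zero, mul_zero, zpow_zero]
  linear_combination (-(1 + ((n : ℂ) - 2) * B)) * e2 + e3 + (d ^ (k * ((n : ℤ) - 1))) * hBn

lemma val_add_one (n : ℕ) [NeZero n] (j : ZMod n) : (j + 1).val = (j.val + 1) % n := by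
  have : j + 1 = ((j.val + 1 : ℕ) : ZMod n) := by push_cast [ZMod.natCast_zmod_val]; ring
  rw [this, ZMod.val_natCast]

lemma val_sub_one (n : ℕ) [NeZero n] (j : ZMod n) (hj : j ≠ 0) : (j - 1).val = j.val - 1 := by
  have hv : 1 ≤ j.val := by
    rcases Nat.eq_zero_or_pos j.val with h | h
    · exact absurd (by rw [← ZMod.natCast_zmod_val j, h, Nat.cast_zero]) hj
    · exact h
  have : j - 1 = ((j.val - 1 : ℕ) : ZMod n) := by
    have : ((j.val - 1 : ℕ) : ZMod n) + 1 = j := by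
      have : (j.val - 1) + 1 = j.val := by omega
      rw [show ((j.val - 1 : ℕ) : ZMod n) + 1 = (((j.val - 1) + 1 : ℕ) : ZMod n) by push_cast; ring,
        this, ZMod.natCast_zmod_val]
    exact (eq_sub_iff_add_eq.mpr this).symm
  rw [this, ZMod.val_cast_of_lt (by have := j.val_lt; omega)]

lemma val_pos' (n : ℕ) [NeZero n] (j : ZMod n) (hj : j ≠ 0) : 1 ≤ j.val := by
  rcases Nat.eq_zero_or_pos j.val with h | h
  · exact absurd (by rw [← ZMod.natCast_zmod_val j, h, Nat.cast_zero]) hj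
  · exact h

lemma natCast_zmod_ne_zero (n : ℕ) [NeZero n] (m : ℕ) (h1 : 0 < m) (h2 : m < n) :
    ((m : ℕ) : ZMod n) ≠ 0 := by
  rw [Ne, ZMod.natCast_eq_zero_iff]
  intro h; have := Nat.le_of_dvd h1 h; omega

/-- the explicit solution satisfies the reduced recurrence -/
lemma cv_solves (n : ℕ) [NeZero n] (hn : 3 ≤ n) (d : ℂ) (hd : d ≠ 0) (k : ℤ)
    (j : ZMod n) (hj : j ≠ 0) :
    2 * cv n d k j.val - d ^ (-k) * cv n d k (j + 1).val - d ^ k * cv n d k (j - 1).val = 0 := by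
  have hv1 : 1 ≤ j.val := val_pos' n j hj
  have hv2 : j.val < n := j.val_lt
  rw [val_add_one, val_sub_one n j hj]
  rcases eq_or_ne (j.val + 1) n with h | h
  · rw [h, Nat.mod_self, show j.val = n - 1 from by omega,
      show n - 1 - 1 = n - 2 from by omega]
    exact cv_wrap n hn d hd k
  · rw [Nat.mod_eq_of_lt (by omega)]
    exact cv_step n d hd k j.val hv1

lemma unique_aux (n : ℕ) [NeZero n] (hn : 3 ≤ n) (d : ℂ) (hd : d ≠ 0) (k : ℤ)
    (c : ZMod n → ℂ) (h0 : c 0 = 1)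
    (hrec : ∀ j : ZMod n, j ≠ 0 →
      2 * c j - d ^ (-k) * c (j + 1) - d ^ k * c (j - 1) = 0) :
    ∀ m : ℕ, m ≤ n - 1 → c ((m : ℕ) : ZMod n) = cb d k (d ^ (-k) * c 1 - 1) m := by
  set β := d ^ (-k) * c 1 - 1 with hβ
  clear_value β
  have base0 : c ((0 : ℕ) : ZMod n) = cb d k β 0 := by
    simp [cb, h0]
  have base1 : c ((1 : ℕ) : ZMod n) = cb d k β 1 := by
    rw [hβ]
    simp only [cb, Nat.cast_one, mul_one]
    have : d ^ (-k) * d ^ k = 1 := by rw [← zpow_add₀ hd]; simp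
    push_cast
    linear_combination (-(c 1)) * this
  intro m
  induction m using Nat.strong_induction_on with
  | _ m ih =>
    intro hm
    match m, hm with
    | 0, _ => exact base0
    | 1, _ => exact base1
    | (l + 2), hm =>
      have h1 : c ((l : ℕ) : ZMod n) = cb d k β l := ih l (by omega) (by omega)
      have h2 : c ((l + 1 : ℕ) : ZMod n) = cb d k β (l + 1) := ih (l + 1) (by omega) (by omega)
      have hj : (((l + 1 : ℕ) : ZMod n)) ≠ 0 := natCast_zmod_ne_zero n (l + 1) (by omega) (by omega)
      have := hrec ((l + 1 : ℕ) : ZMod n) hj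
      rw [show (((l + 1 : ℕ) : ZMod n) + 1) = ((l + 2 : ℕ) : ZMod n) by push_cast; ring,
        show (((l + 1 : ℕ) : ZMod n) - 1) = ((l : ℕ) : ZMod n) by push_cast; ring,
        h1, h2] at this
      have hkk : d ^ (-k) * d ^ k = 1 := by rw [← zpow_add₀ hd]; simp
      have e1 : d ^ k * d ^ (k * ((l : ℤ) + 1)) = d ^ (k * ((l : ℤ) + 2)) := by
        rw [← zpow_add₀ hd]; congr 1; ring
      have e2 : d ^ k * (d ^ k * d ^ (k * (l : ℤ))) = d ^ (k * ((l : ℤ) + 2)) := by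
        rw [← zpow_add₀ hd, ← zpow_add₀ hd]; congr 1; ring
      unfold cb at this ⊢
      push_cast at this ⊢
      linear_combination (-(d ^ k)) * this + (-(c ((l : ZMod n) + 2))) * hkk
        + (2 * (1 + ((l : ℂ) + 1) * β)) * e1 + (-(1 + (l : ℂ) * β)) * e2

/-- the wrap equation pins down β -/
lemma beta_det (n : ℕ) (hn : 3 ≤ n) (d : ℂ) (hd : d ≠ 0) (k : ℤ) (β : ℂ)
    (heq : 2 * cb d k β (n - 1) - d ^ (-k) * 1 - d ^ k * cb d k β (n - 2) = 0) :
    β = (d ^ (-(n : ℤ) * k) - 1) / (n : ℂ) := by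
  have hn0 : (n : ℂ) ≠ 0 := Nat.cast_ne_zero.mpr (by omega)
  have hX : d ^ (k * ((n : ℤ) - 1)) ≠ 0 := zpow_ne_zero _ hd
  unfold cb at heq
  have c1 : ((n - 1 : ℕ) : ℂ) = (n : ℂ) - 1 := by push_cast [Nat.cast_sub (by omega : 1 ≤ n)]; ring
  have c2 : ((n - 2 : ℕ) : ℂ) = (n : ℂ) - 2 := by push_cast [Nat.cast_sub (by omega : 2 ≤ n)]; ring
  have c3 : ((n - 1 : ℕ) : ℤ) = (n : ℤ) - 1 := by omega
  have c4 : ((n - 2 : ℕ) : ℤ) = (n : ℤ) - 2 := by omega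
  rw [c1, c2, c3, c4] at heq
  have e2 : d ^ k * d ^ (k * ((n : ℤ) - 2)) = d ^ (k * ((n : ℤ) - 1)) := by
    rw [← zpow_add₀ hd]; congr 1; ring
  have e3 : d ^ (-(n : ℤ) * k) * d ^ (k * ((n : ℤ) - 1)) = d ^ (-k) := by
    rw [← zpow_add₀ hd]; congr 1; ring
  have key : (β * (n : ℂ)) * d ^ (k * ((n : ℤ) - 1))
      = (d ^ (-(n : ℤ) * k) - 1) * d ^ (k * ((n : ℤ) - 1)) := by
    linear_combination heq + (1 + ((n : ℂ) - 2) * β) * e2 - e3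
  have key2 : β * (n : ℂ) = d ^ (-(n : ℤ) * k) - 1 := mul_right_cancel₀ hX key
  rw [eq_div_iff hn0]
  exact key2

lemma sol_eq (n : ℕ) [NeZero n] (hn : 3 ≤ n) (d : ℂ) (hd : d ≠ 0) (k : ℤ)
    (c : ZMod n → ℂ) (h0 : c 0 = 1)
    (hrec : ∀ j : ZMod n, j ≠ 0 →
      2 * c j - d ^ (-k) * c (j + 1) - d ^ k * c (j - 1) = 0) :
    ∀ i : ZMod n, c i = cv n d k i.val := by
  have hA := unique_aux n hn d hd k c h0 hrec
  set β := d ^ (-k) * c 1 - 1 with hβ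
  have hjw : (((n - 1 : ℕ) : ZMod n)) ≠ 0 := natCast_zmod_ne_zero n (n - 1) (by omega) (by omega)
  have hw := hrec ((n - 1 : ℕ) : ZMod n) hjw
  have hp1 : (((n - 1 : ℕ) : ZMod n) + 1) = 0 := by
    rw [show (((n - 1 : ℕ) : ZMod n) + 1) = (((n - 1) + 1 : ℕ) : ZMod n) by push_cast; ring,
      show (n - 1) + 1 = n from by omega, ZMod.natCast_self]
  have hm1 : (((n - 1 : ℕ) : ZMod n) - 1) = ((n - 2 : ℕ) : ZMod n) := by
    have : ((n - 2 : ℕ) : ZMod n) + 1 = ((n - 1 : ℕ) : ZMod n) := by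
      rw [show ((n - 2 : ℕ) : ZMod n) + 1 = (((n - 2) + 1 : ℕ) : ZMod n) by push_cast; ring,
        show (n - 2) + 1 = n - 1 from by omega]
    exact (eq_sub_iff_add_eq.mpr this).symm
  rw [hp1, hm1, h0, hA (n - 1) le_rfl, hA (n - 2) (by omega)] at hw
  have hbd : β = (d ^ (-(n : ℤ) * k) - 1) / (n : ℂ) := beta_det n hn d hd k β hw
  intro i
  have hv : i.val ≤ n - 1 := by have := i.val_lt; omega
  calc c i = c ((i.val : ℕ) : ZMod n) := by rw [ZMod.natCast_zmod_val]
    _ = cb d k β i.val := hA i.val hv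
    _ = cv n d k i.val := by rw [hbd]; rfl

lemma tele (N : ℕ) (G : ℕ → ℂ) (pv : ℕ) :
    ∑ x ∈ Finset.range N, G x * ((if x = pv then (1:ℂ) else 0) - if x + 1 = pv then 1 else 0)
    = (if pv < N then G pv else 0) - (if 1 ≤ pv ∧ pv ≤ N then G (pv - 1) else 0) := by
  have split : ∀ x, G x * ((if x = pv then (1:ℂ) else 0) - if x + 1 = pv then 1 else 0)
      = (if x = pv then G x else 0) - (if x + 1 = pv then G x else 0) := by
    intro x; split_ifs <;> ring
  rw [Finset.sum_congr rfl fun x _ => split x, Finset.sum_sub_distrib]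
  congr 1
  · rw [Finset.sum_ite_eq' (Finset.range N) pv G]
    simp [Finset.mem_range]
  · rcases Nat.eq_zero_or_pos pv with h | h
    · subst h; simp
    · obtain ⟨w, rfl⟩ : ∃ w, pv = w + 1 := ⟨pv - 1, by omega⟩
      have hc : ∀ x, (if x + 1 = w + 1 then G x else 0) = (if x = w then G x else 0) := by
        intro x; simp
      rw [Finset.sum_congr rfl fun x _ => hc x, Finset.sum_ite_eq' (Finset.range N) w G]
      simp only [Finset.mem_range, Nat.add_sub_cancel]
      split_ifs <;> first | rfl | omega

lemma matrix_part (n : ℕ) [NeZero n] (hn : 3 ≤ n) (d : ℂ) (hd : d ≠ 0) (k : ℤ)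
    (c : ZMod n → ℂ) (hc : ∀ i, c i = cv n d k i.val) :
      c 0 • (Matrix.single (⟨n - 1, by have := hn; omega⟩ : Fin n) (⟨n - 1, by have := hn; omega⟩ : Fin n) (1 : ℂ) -
          d ^ ((n : ℤ) * k) • Matrix.single (⟨0, by have := hn; omega⟩ : Fin n) (⟨0, by have := hn; omega⟩ : Fin n) 1) +
        ∑ i : Fin (n - 1),
          c (((i : ℕ) + 1 : ℕ) : ZMod n) •
            (d ^ (((n : ℤ) - ((i : ℕ) + 1)) * k) •
              (Matrix.single (⟨(i : ℕ), lt_of_lt_of_le i.isLt (Nat.sub_le n 1)⟩ : Fin n)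
                  (⟨(i : ℕ), lt_of_lt_of_le i.isLt (Nat.sub_le n 1)⟩ : Fin n) (1 : ℂ) -
                Matrix.single (⟨(i : ℕ) + 1, Nat.add_lt_of_lt_sub i.isLt⟩ : Fin n)
                  (⟨(i : ℕ) + 1, Nat.add_lt_of_lt_sub i.isLt⟩ : Fin n) 1)) =
        ((1 - d ^ ((n : ℤ) * k)) / (n : ℂ)) • (1 : Matrix (Fin n) (Fin n) ℂ) := by
  have hn0 : (n : ℂ) ≠ 0 := Nat.cast_ne_zero.mpr (by omega)
  have h0 : c 0 = 1 := by rw [hc]; simp [cv]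
  set B := (d ^ (-(n : ℤ) * k) - 1) / (n : ℂ) with hB
  set D := d ^ ((n : ℤ) * k) with hD
  have hZD : d ^ (-(n : ℤ) * k) * D = 1 := by
    rw [hD, ← zpow_add₀ hd, show -(n : ℤ) * k + (n : ℤ) * k = 0 by ring, zpow_zero]
  set G : ℕ → ℂ := fun x => (1 + ((x : ℂ) + 1) * B) * D with hG
  have hGval : ∀ x : ℕ, x < n - 1 →
      c (((x : ℕ) + 1 : ℕ) : ZMod n) * d ^ (((n : ℤ) - ((x : ℕ) + 1)) * k) = G x := by
    intro x hx
    rw [hc, ZMod.val_natCast, Nat.mod_eq_of_lt (by omega), hG]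
    unfold cv
    rw [← hB]
    have e : d ^ (k * ((x + 1 : ℕ) : ℤ)) * d ^ (((n : ℤ) - ((x : ℕ) + 1)) * k) = D := by
      rw [hD, ← zpow_add₀ hd]; congr 1; push_cast; ring
    push_cast at e ⊢
    linear_combination (1 + ((x : ℂ) + 1) * B) * e
  ext p q
  simp only [Matrix.add_apply, Matrix.smul_apply, Matrix.sub_apply, Matrix.sum_apply,
    Matrix.one_apply, Matrix.single, Matrix.of_apply, smul_eq_mul]
  simp only [show ∀ (a : ℕ) (h : a < n) (r : Fin n), ((⟨a, h⟩ : Fin n) = r) = (a = r.val) from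
    fun a h r => by rw [Fin.ext_iff]]
  rw [h0]
  rw [Fin.sum_univ_eq_sum_range (fun x : ℕ => c (((x : ℕ) + 1 : ℕ) : ZMod n) *
    (d ^ (((n : ℤ) - ((x : ℕ) + 1)) * k) *
      ((if x = (p : ℕ) ∧ x = (q : ℕ) then (1 : ℂ) else 0) -
        if x + 1 = (p : ℕ) ∧ x + 1 = (q : ℕ) then 1 else 0)))]
  rw [Finset.sum_congr rfl fun x hx => by
    rw [← mul_assoc, hGval x (Finset.mem_range.mp hx)]]
  by_cases hpq : (p : ℕ) = (q : ℕ)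
  · simp only [← hpq, and_self]
    rw [if_true, tele (n - 1) G (p : ℕ)]
    have hBD : (n : ℂ) * B = d ^ (-(n : ℤ) * k) - 1 := by rw [hB]; field_simp
    have hBD2 : (n : ℂ) * (B * D) = 1 - D := by linear_combination D * hBD + hZD
    have hplt : (p : ℕ) < n := p.isLt
    by_cases hp0 : (p : ℕ) = 0
    · rw [hp0, if_neg (by omega), if_pos rfl, if_pos (by omega), if_neg (by omega),
        div_mul_eq_mul_div, eq_div_iff hn0]
      simp only [hG]
      push_cast
      linear_combination hBD2
    · by_cases hpl : (p : ℕ) = n - 1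
      · rw [hpl, if_pos rfl, if_neg (by omega), if_neg (by omega), if_pos (by omega),
          show n - 1 - 1 = n - 2 from by omega, div_mul_eq_mul_div, eq_div_iff hn0]
        simp only [hG]
        push_cast [Nat.cast_sub (show 2 ≤ n by omega)]
        linear_combination (1 - (n : ℂ)) * hBD2
      · rw [if_neg (by omega), if_neg (by omega), if_pos (by omega), if_pos (by omega),
          div_mul_eq_mul_div, eq_div_iff hn0]
        simp only [hG]
        push_cast [Nat.cast_sub (show 1 ≤ (p : ℕ) by omega)]
        linear_combination hBD2
  · rw [if_neg (by rintro ⟨h1, h2⟩; omega), if_neg (by rintro ⟨h1, h2⟩; omega),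
      if_neg hpq, Finset.sum_eq_zero fun x _ => by
        rw [if_neg (by rintro ⟨h1, h2⟩; omega), if_neg (by rintro ⟨h1, h2⟩; omega)]
        ring]
    ring

/-- For `n ≥ 3`, `d` not a root of unity and `k ≠ 0`, the system
`Σ_i a_{i,j}d^{−k·m_{i,j}}·c_i = 0` (for all `j ≠ 0`), `c_0 = 1` has a unique solution,
and for this solution `c_0·(E_{n,n} − d^{nk}E_{1,1}) + Σ_{i=1}^{n−1} c_i·d^{(n−i)k}·(E_{i,i} −
E_{i+1,i+1})` equals the scalar matrix `((1 − d^{nk})/n)·I_n`. -/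
theorem stmt13 (n : ℕ) [NeZero n] (hn : 3 ≤ n) (d : ℂ) (hd : d ≠ 0)
    (hroot : ∀ m : ℕ, m ≠ 0 → d ^ m ≠ 1) (k : ℤ) (hk : k ≠ 0) :
    (∃! c : ZMod n → ℂ, c 0 = 1 ∧
      ∀ j : ZMod n, j ≠ 0 → ∑ i : ZMod n, aCartan n i j * d ^ (-k * mExp n i j) * c i = 0) ∧
    (∀ c : ZMod n → ℂ, (c 0 = 1 ∧
        ∀ j : ZMod n, j ≠ 0 → ∑ i : ZMod n, aCartan n i j * d ^ (-k * mExp n i j) * c i = 0) →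
      c 0 • (Matrix.single (⟨n - 1, by omega⟩ : Fin n) (⟨n - 1, by omega⟩ : Fin n) (1 : ℂ) -
          d ^ ((n : ℤ) * k) • Matrix.single (⟨0, by omega⟩ : Fin n) (⟨0, by omega⟩ : Fin n) 1) +
        ∑ i : Fin (n - 1),
          c (((i : ℕ) + 1 : ℕ) : ZMod n) •
            (d ^ (((n : ℤ) - ((i : ℕ) + 1)) * k) •
              (Matrix.single (⟨(i : ℕ), by have := i.isLt; omega⟩ : Fin n)
                  (⟨(i : ℕ), by have := i.isLt; omega⟩ : Fin n) (1 : ℂ) -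
                Matrix.single (⟨(i : ℕ) + 1, by have := i.isLt; omega⟩ : Fin n)
                  (⟨(i : ℕ) + 1, by have := i.isLt; omega⟩ : Fin n) 1)) =
        ((1 - d ^ ((n : ℤ) * k)) / (n : ℂ)) • (1 : Matrix (Fin n) (Fin n) ℂ)) := by
  have hsolves : ∀ j : ZMod n, j ≠ 0 →
      ∑ i : ZMod n, aCartan n i j * d ^ (-k * mExp n i j) * (fun i => cv n d k i.val) i = 0 := by
    intro j hj
    rw [sum_reduce n hn d k _ j]
    exact cv_solves n hn d hd k j hj
  have hcs0 : (fun i : ZMod n => cv n d k i.val) 0 = 1 := by simp [cv]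
  have huniq : ∀ c : ZMod n → ℂ, (c 0 = 1 ∧
      ∀ j : ZMod n, j ≠ 0 → ∑ i : ZMod n, aCartan n i j * d ^ (-k * mExp n i j) * c i = 0) →
      ∀ i, c i = cv n d k i.val := by
    intro c hc
    exact sol_eq n hn d hd k c hc.1 fun j hj => by
      rw [← sum_reduce n hn d k c j]; exact hc.2 j hj
  constructor
  · exact ⟨fun i => cv n d k i.val, ⟨hcs0, hsolves⟩, fun c hc => funext fun i => huniq c hc i⟩
  · intro c hc
    exact matrix_part n hn d hd k c (huniq c hc)
end

section
/- For n ≥ 2 and any d ∈ ℂ×, the following assignment respects the commutator brackets of matrix units tensored with difference operators: setting ē_i = E_{i,i+1} ⊗ D^k·d^{(n−i)k} for 1 ≤ i ≤ n−1 and ē_0 = E_{n,1} ⊗ D^k Z, together with h̄_{i,k} = d^{(n−i)k}(E_{i,i} − E_{i+1,i+1}) ⊗ D^k for 1 ≤ i ≤ n−1, one has in M_n(𝔡_{d^n}): [h̄_{i,k}, d^{(n−j)l}E_{j,j+1} ⊗ D^l] = a_{i,j}·d^{−k·m_{i,j}}·d^{(n−j)(l+k)}·E_{j,j+1} ⊗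 D^{l+k} for all i,j ∈ {1,…,n−1} and k,l ∈ ℤ, where a_{i,j} = 2δ_{i,j} − δ_{i,j+1} − δ_{i,j−1} and m_{i,j} = δ_{i,j+1} − δ_{i,j−1}. -/
open Matrix

lemma dbr_single (n : ℕ) (t : ℂ) (k l : ℤ) (A B : Matrix (Fin n) (Fin n) ℂ) :
    dbr n t (Finsupp.single (k,0) A) (Finsupp.single (l,0) B)
      = Finsupp.single (k+l,0) (A*B - B*A) := by
  simp [dbr, dmul, Finsupp.sum_single_index, Finsupp.single_sub, add_comm l k]

lemma mul1 {n : ℕ} (p q r s : Fin n) : Matrix.single p q (1:ℂ) * Matrix.single r s 1 =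
    if q = r then Matrix.single p s 1 else 0 := by
  by_cases h : q = r
  · subst h; simp [single_mul_single_same]
  · simp [h, Matrix.single_mul_single_of_ne (h := h)]

lemma brmat {n : ℕ} (a b c e : Fin n) :
    (Matrix.single a a (1:ℂ) - Matrix.single b b 1) * Matrix.single c e 1
      - Matrix.single c e 1 * (Matrix.single a a 1 - Matrix.single b b 1)
    = (((if a = c then (1:ℂ) else 0) - (if b = c then 1 else 0))
        - ((if e = a then 1 else 0) - (if e = b then 1 else 0))) • Matrix.single c e 1 := by
  rw [sub_mul, mul_sub, mul1, mul1, mul1, mul1]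
  by_cases h1 : a = c <;> by_cases h2 : b = c <;> by_cases h3 : e = a <;> by_cases h4 : e = b <;>
    subst_vars <;> split_ifs <;> module

/-- In `M_n(𝔡_{d^n})`, with `h̄_{i,k} = d^{(n−i)k}(E_{i,i} − E_{i+1,i+1}) ⊗ D^k`, one has
`[h̄_{i,k}, d^{(n−j)l}E_{j,j+1} ⊗ D^l] = a_{i,j}·d^{−k·m_{i,j}}·d^{(n−j)(l+k)}·E_{j,j+1} ⊗ D^{l+k}`
for all `i,j ∈ {1,…,n−1}`, `k,l ∈ ℤ`, where `a_{i,j} = 2δ_{i,j} − δ_{i,j+1} − δ_{i,j−1}` and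
`m_{i,j} = δ_{i,j+1} − δ_{i,j−1}` — relation (u5) of the classical limit. -/
theorem stmt14 (n : ℕ) (hn : 2 ≤ n) (d : ℂ) (hd : d ≠ 0)
    (i j : ℕ) (hi : 1 ≤ i) (hi' : i ≤ n - 1) (hj : 1 ≤ j) (hj' : j ≤ n - 1) (k l : ℤ) :
    dbr n (d ^ (n : ℤ))
      (Finsupp.single (k, 0) (d ^ (((n : ℤ) - i) * k) •
        (Matrix.single (⟨i - 1, by omega⟩ : Fin n) (⟨i - 1, by omega⟩ : Fin n) (1 : ℂ) -
          Matrix.single (⟨i, by omega⟩ : Fin n) (⟨i, by omega⟩ : Fin n) 1)))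
      (Finsupp.single (l, 0) (d ^ (((n : ℤ) - j) * l) •
        Matrix.single (⟨j - 1, by omega⟩ : Fin n) (⟨j, by omega⟩ : Fin n) (1 : ℂ))) =
    ((2 * (if i = j then 1 else 0) - (if i = j + 1 then 1 else 0) -
        (if i = j - 1 then 1 else 0) : ℂ) *
      d ^ (-k * ((if i = j + 1 then 1 else 0) - (if i = j - 1 then (1 : ℤ) else 0)))) •
      Finsupp.single (k + l, 0) (d ^ (((n : ℤ) - j) * (l + k)) •
        Matrix.single (⟨j - 1, by omega⟩ : Fin n) (⟨j, by omega⟩ : Fin n) (1 : ℂ)) := by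
  rw [dbr_single, Finsupp.smul_single]
  congr 1
  rw [smul_mul_assoc, mul_smul_comm, smul_smul, mul_smul_comm, smul_mul_assoc, smul_smul,
    ← smul_sub, brmat, smul_smul, smul_smul]
  congr 1
  have hac : ((⟨i - 1, by omega⟩ : Fin n) = ⟨j - 1, by omega⟩) ↔ i = j := by
    rw [Fin.mk.injEq]; try omega
  have hbc : ((⟨i, by omega⟩ : Fin n) = ⟨j - 1, by omega⟩) ↔ i = j - 1 := by
    rw [Fin.mk.injEq]; try omega
  have hea : ((⟨j, by omega⟩ : Fin n) = ⟨i - 1, by omega⟩) ↔ i = j + 1 := by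
    rw [Fin.mk.injEq]; try omega
  have heb : ((⟨j, by omega⟩ : Fin n) = ⟨i, by omega⟩) ↔ i = j := by
    rw [Fin.mk.injEq]; try omega
  simp only [hac, hbc, hea, heb]
  by_cases h1 : i = j
  · have h2 : ¬ i = j + 1 := by omega
    have h3 : ¬ i = j - 1 := by omega
    simp only [if_pos h1, if_neg h2, if_neg h3]
    rw [← zpow_add₀ hd, mul_assoc, ← zpow_add₀ hd]
    have : ((n:ℤ) - i) * k + ((n:ℤ) - j) * l = -k * (0 - 0) + ((n:ℤ) - j) * (l + k) := by
      rw [h1]; ring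
    rw [this]; ring
  · by_cases h2 : i = j + 1
    · have h3 : ¬ i = j - 1 := by omega
      simp only [if_neg h1, if_pos h2, if_neg h3]
      rw [← zpow_add₀ hd, mul_assoc, ← zpow_add₀ hd]
      have : ((n:ℤ) - i) * k + ((n:ℤ) - j) * l = -k * (1 - 0) + ((n:ℤ) - j) * (l + k) := by
        rw [h2]; push_cast; ring
      rw [this]; ring
    · by_cases h3 : i = j - 1
      · have hji : (i : ℤ) = (j : ℤ) - 1 := by omega
        simp only [if_neg h1, if_neg h2, if_pos h3]
        rw [← zpow_add₀ hd, mul_assoc, ← zpow_add₀ hd]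
        have : ((n:ℤ) - i) * k + ((n:ℤ) - j) * l = -k * (0 - 1) + ((n:ℤ) - j) * (l + k) := by
          rw [hji]; ring
        rw [this]; ring
      · simp only [if_neg h1, if_neg h2, if_neg h3]
        ring
end
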